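/- Let d ≥ 1 be an integer and γ ∈ (1,2). Then for every x ∈ ℝ^d with |x| ≥ 1 and every y ∈ ℝ^d, one has | ( |x|^{γ−2} − ⟨x⟩^{γ−2} ) (x·y) | ≤ ((2−γ)/2) |y|. -/

import Mathlib

theorem stmt_8 (d : ℕ) (hd : 1 ≤ d) (γ : ℝ) (hγ1 : 1 < γ) (hγ2 : γ < 2)
    (x y : EuclideanSpace ℝ (Fin d)) (hx : 1 ≤ ‖x‖) :
    |(‖x‖ ^ (γ - 2) - Real.sqrt (1 + ‖x‖ ^ 2) ^ (γ - 2)) * (inner ℝ x y : ℝ)|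
      ≤ (2 - γ) / 2 * ‖y‖ := by
  set r : ℝ := ‖x‖ with hr
  set s : ℝ := Real.sqrt (1 + r ^ 2) with hs
  set α : ℝ := 2 - γ with hαdef
  have hα0 : 0 < α := by simp [hαdef]; linarith
  have hα1 : α ≤ 1 := by simp [hαdef]; linarith
  have hr0 : (0:ℝ) < r := lt_of_lt_of_le one_pos hx
  have hsq : s ^ 2 = 1 + r ^ 2 := Real.sq_sqrt (by positivity)
  have hs0 : 0 ≤ s := Real.sqrt_nonneg _
  have hs1 : 1 ≤ s := by nlinarith
  have hrs : r ≤ s := by nlinarith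
  have hsr2 : s - r ≤ 1 / 2 := by nlinarith
  set A : ℝ := r ^ α with hA
  set B : ℝ := s ^ α with hB
  have hA1 : 1 ≤ A := Real.one_le_rpow hx hα0.le
  have hB1 : 1 ≤ B := Real.one_le_rpow hs1 hα0.le
  have hA0 : 0 < A := by linarith
  have hB0 : 0 < B := by linarith
  have hAB : A ≤ B := Real.rpow_le_rpow hr0.le hrs hα0.le
  -- key Bernoulli step : (B - A) * r ≤ α * A * (s - r)
  have hkey : (B - A) * r ≤ α * A * (s - r) := by
    have h1 : (1 + (s - r) / r) ^ α ≤ 1 + α * ((s - r) / r) :=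
      rpow_one_add_le_one_add_mul_self
        (by have : (0:ℝ) ≤ (s - r)/r := div_nonneg (by linarith) hr0.le; linarith) hα0.le hα1
    have h2 : 1 + (s - r) / r = s / r := by field_simp; ring
    rw [h2, Real.div_rpow (by positivity) hr0.le, ← hB, ← hA] at h1
    have h3 : B ≤ A * (1 + α * ((s - r) / r)) := by
      rw [← div_le_iff₀' hA0]; exact h1
    have h4 : A * (1 + α * ((s - r) / r)) * r = A * r + α * A * (s - r) := by
      field_simp
    have h5 := mul_le_mul_of_nonneg_right h3 hr0.le
    rw [h4] at h5
    linarith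
  -- rewrite the powers as inverses
  have hγα : γ - 2 = -α := by rw [hαdef]; ring
  have hrpow : r ^ (γ - 2) = A⁻¹ := by rw [hγα, Real.rpow_neg hr0.le, hA]
  have hspow : s ^ (γ - 2) = B⁻¹ := by rw [hγα, Real.rpow_neg (by linarith : (0:ℝ) ≤ s), hB]
  have hD0 : 0 ≤ A⁻¹ - B⁻¹ := by
    have := inv_anti₀ hA0 hAB
    linarith
  have hDr : (A⁻¹ - B⁻¹) * r ≤ α / 2 := by
    rw [inv_sub_inv hA0.ne' hB0.ne']
    rw [div_mul_eq_mul_div, div_le_iff₀ (by positivity)]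
    have h6 : α * A * (s - r) ≤ α * A * (1/2) :=
      mul_le_mul_of_nonneg_left hsr2 (mul_pos hα0 hA0).le
    have h8 : (0:ℝ) ≤ A * B - A := by nlinarith
    have h9 : (0:ℝ) ≤ α * (A * B - A) := mul_nonneg hα0.le h8
    clear_value r s α A B
    linarith [hkey, h6, h9]
  have hinner : |(inner ℝ x y : ℝ)| ≤ r * ‖y‖ := abs_real_inner_le_norm x y
  calc |(r ^ (γ - 2) - s ^ (γ - 2)) * (inner ℝ x y : ℝ)|
      = (A⁻¹ - B⁻¹) * |(inner ℝ x y : ℝ)| := by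
        rw [abs_mul, hrpow, hspow, abs_of_nonneg hD0]
    _ ≤ (A⁻¹ - B⁻¹) * (r * ‖y‖) := by
        exact mul_le_mul_of_nonneg_left hinner hD0
    _ = ((A⁻¹ - B⁻¹) * r) * ‖y‖ := by ring
    _ ≤ α / 2 * ‖y‖ := mul_le_mul_of_nonneg_right hDr (norm_nonneg y)
    _ = (2 - γ) / 2 * ‖y‖ := by rw [hαdef]
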